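/- Let f(z) = z + ∑_{k=2}^∞ a_k z^k be analytic on 𝔻. If ∑_{k=2}^∞ (k²−1)·|a_k| ≤ 3/2, then f ∈ Ω. -/

import Mathlib

open Complex Metric

/-- The open unit disc in `ℂ`. -/
def unitDisc : Set ℂ := Metric.ball 0 1

/-- `f ∈ 𝒜ₙ`: `f` is analytic on the unit disc with power series
`f(z) = z + ∑_{k=n+1}^∞ a_k z^k`. -/
def MemA (n : ℕ) (f : ℂ → ℂ) : Prop :=
  DifferentiableOn ℂ f unitDisc ∧
    ∃ a : ℕ → ℂ, ∀ z ∈ unitDisc, f z = z + ∑' k : ℕ, a k * z ^ (n + 1 + k)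

/-- `f ∈ Ωₙ`: `f ∈ 𝒜ₙ` and `|z f'(z) - f(z)| < 1/2` on the unit disc. -/
def MemOmega (n : ℕ) (f : ℂ → ℂ) : Prop :=
  MemA n f ∧ ∀ z ∈ unitDisc, ‖z * deriv f z - f z‖ < 1 / 2

lemma deriv_aux_stmt5 (a : ℕ → ℂ) (hu : Summable fun k : ℕ => ((2:ℝ)+k) * ‖a k‖)
    (z : ℂ) (hz : ‖z‖ < 1) :
    HasDerivAt (fun y : ℂ => ∑' k : ℕ, a k * y ^ (2+k))
      (∑' k : ℕ, a k * ((2+k : ℕ) : ℂ) * z ^ (1+k)) z := by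
  set r : ℝ := (‖z‖ + 1)/2 with hr
  have hn0 : (0:ℝ) ≤ ‖z‖ := norm_nonneg z
  have hr0 : 0 < r := by positivity
  have hr1 : r < 1 := by rw [hr]; linarith
  have hzr : ‖z‖ < r := by rw [hr]; linarith
  refine hasDerivAt_tsum_of_isPreconnected (u := fun k : ℕ => ((2:ℝ)+k) * ‖a k‖)
    (g := fun k y => a k * y ^ (2+k))
    (g' := fun k y => a k * ((2+k:ℕ):ℂ) * y ^ (1+k))
    hu isOpen_ball (convex_ball (0:ℂ) r).isPreconnected
    (fun k y _ => ?_) (fun k y hy => ?_) (mem_ball_self hr0) ?_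
    (mem_ball_zero_iff.2 hzr)
  · have h := (hasDerivAt_pow (2+k) y).const_mul (a k)
    have e : 2+k-1 = 1+k := by omega
    rw [e] at h
    simpa [mul_assoc] using h
  · have hy1 : ‖y‖ < 1 := lt_trans (mem_ball_zero_iff.1 hy) hr1
    have hp : ‖y‖ ^ (1+k) ≤ 1 := pow_le_one₀ (norm_nonneg y) hy1.le
    have : ‖a k * ((2+k:ℕ):ℂ) * y ^ (1+k)‖ = ‖a k‖ * ((2:ℝ)+k) * ‖y‖^(1+k) := by
      rw [norm_mul, norm_mul, norm_pow, Complex.norm_natCast]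
      push_cast; ring
    rw [this]
    have h2 : (0:ℝ) ≤ ‖a k‖ * ((2:ℝ)+k) := by positivity
    calc ‖a k‖ * ((2:ℝ)+k) * ‖y‖^(1+k) ≤ ‖a k‖ * ((2:ℝ)+k) * 1 :=
          mul_le_mul_of_nonneg_left hp h2
      _ = ((2:ℝ)+k) * ‖a k‖ := by ring
  · have : (fun k : ℕ => a k * (0:ℂ) ^ (2+k)) = fun _ => 0 := by
      funext k; simp
    rw [this]; exact summable_zero

theorem stmt_5 (f : ℂ → ℂ) (a : ℕ → ℂ)
    (hf : DifferentiableOn ℂ f unitDisc)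
    (hrep : ∀ z ∈ unitDisc, f z = z + ∑' k : ℕ, a k * z ^ (2 + k))
    (hsum : Summable fun k : ℕ => (((2 : ℝ) + k) ^ 2 - 1) * ‖a k‖)
    (hle : ∑' k : ℕ, (((2 : ℝ) + k) ^ 2 - 1) * ‖a k‖ ≤ 3 / 2) :
    MemOmega 1 f := by
  have hopen : IsOpen unitDisc := isOpen_ball
  have hu : Summable (fun k : ℕ => ((2:ℝ)+k) * ‖a k‖) := by
    refine Summable.of_nonneg_of_le (fun k => by positivity) (fun k => ?_) hsum
    have hk : (0:ℝ) ≤ (k:ℝ) := Nat.cast_nonneg k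
    have : ((2:ℝ)+k) ≤ ((2:ℝ)+k)^2 - 1 := by nlinarith
    exact mul_le_mul_of_nonneg_right this (norm_nonneg _)
  refine ⟨⟨hf, a, fun z hz => ?_⟩, fun z hz => ?_⟩
  · rw [hrep z hz]
  · have hz1 : ‖z‖ < 1 := mem_ball_zero_iff.1 hz
    have hder : HasDerivAt f (1 + ∑' k : ℕ, a k * ((2+k:ℕ):ℂ) * z ^ (1+k)) z := by
      have h1 := (hasDerivAt_id z).add (deriv_aux_stmt5 a hu z hz1)
      exact h1.congr_of_eventuallyEq (Filter.eventuallyEq_of_mem (hopen.mem_nhds hz) hrep)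
    rw [hder.deriv, hrep z hz]
    have hzp : ∀ k : ℕ, ‖z‖ ^ (2+k) ≤ 1 := fun k => pow_le_one₀ (norm_nonneg z) hz1.le
    have hs1 : Summable (fun k : ℕ => a k * ((2+k:ℕ):ℂ) * z^(2+k)) := by
      refine Summable.of_norm_bounded hu (fun k => ?_)
      rw [norm_mul, norm_mul, norm_pow, Complex.norm_natCast]
      have h2 : (0:ℝ) ≤ ‖a k‖ * ((2:ℝ)+k) := by positivity
      calc ‖a k‖ * (((2:ℕ)+k : ℕ):ℝ) * ‖z‖^(2+k) ≤ ‖a k‖ * (((2:ℕ)+k : ℕ):ℝ) * 1 := by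
            push_cast; exact mul_le_mul_of_nonneg_left (hzp k) h2
        _ = ((2:ℝ)+k) * ‖a k‖ := by push_cast; ring
    have hs2 : Summable (fun k : ℕ => a k * z^(2+k)) := by
      refine Summable.of_norm_bounded hu (fun k => ?_)
      rw [norm_mul, norm_pow]
      have hk : (0:ℝ) ≤ (k:ℝ) := Nat.cast_nonneg k
      calc ‖a k‖ * ‖z‖^(2+k) ≤ ‖a k‖ * 1 :=
            mul_le_mul_of_nonneg_left (hzp k) (norm_nonneg _)
        _ ≤ ((2:ℝ)+k) * ‖a k‖ := by nlinarith [norm_nonneg (a k)]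
    have key : z * (1 + ∑' k : ℕ, a k * ((2+k:ℕ):ℂ) * z^(1+k))
        - (z + ∑' k : ℕ, a k * z^(2+k))
        = ∑' k : ℕ, a k * ((1+k:ℕ):ℂ) * z ^ (2+k) := by
      have hz2 : z * ∑' k : ℕ, a k * ((2+k:ℕ):ℂ) * z^(1+k)
          = ∑' k : ℕ, a k * ((2+k:ℕ):ℂ) * z^(2+k) := by
        rw [← tsum_mul_left]
        exact tsum_congr (fun k => by ring)
      have e1 : z * (1 + ∑' k : ℕ, a k * ((2+k:ℕ):ℂ) * z^(1+k))
          - (z + ∑' k : ℕ, a k * z^(2+k))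
          = z * ∑' k : ℕ, a k * ((2+k:ℕ):ℂ) * z^(1+k) - ∑' k : ℕ, a k * z^(2+k) := by
        ring
      rw [e1, hz2, ← Summable.tsum_sub hs1 hs2]
      exact tsum_congr (fun k => by push_cast; ring)
    rw [key]
    have hs3 : Summable (fun k : ℕ => ‖a k * ((1+k:ℕ):ℂ) * z ^ (2+k)‖) := by
      refine Summable.of_nonneg_of_le (fun k => norm_nonneg _) (fun k => ?_) hu
      rw [norm_mul, norm_mul, norm_pow, Complex.norm_natCast]
      have hk : (0:ℝ) ≤ (k:ℝ) := Nat.cast_nonneg k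
      have h1 : ‖a k‖ * (((1:ℕ)+k : ℕ):ℝ) * ‖z‖^(2+k) ≤ ‖a k‖ * (((1:ℕ)+k : ℕ):ℝ) * 1 :=
        mul_le_mul_of_nonneg_left (hzp k) (by positivity)
      calc ‖a k‖ * (((1:ℕ)+k : ℕ):ℝ) * ‖z‖^(2+k) ≤ ‖a k‖ * (((1:ℕ)+k : ℕ):ℝ) * 1 := h1
        _ ≤ ((2:ℝ)+k) * ‖a k‖ := by push_cast; nlinarith [norm_nonneg (a k)]
    have hs4 : Summable (fun k : ℕ => ‖z‖ * ((1/3) * ((((2:ℝ)+k)^2 - 1) * ‖a k‖))) :=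
      ((hsum.mul_left (1/3)).mul_left ‖z‖)
    calc ‖∑' k : ℕ, a k * ((1+k:ℕ):ℂ) * z ^ (2+k)‖
        ≤ ∑' k : ℕ, ‖a k * ((1+k:ℕ):ℂ) * z ^ (2+k)‖ := norm_tsum_le_tsum_norm hs3
      _ ≤ ∑' k : ℕ, ‖z‖ * ((1/3) * ((((2:ℝ)+k)^2 - 1) * ‖a k‖)) := by
          refine Summable.tsum_le_tsum (fun k => ?_) hs3 hs4
          rw [norm_mul, norm_mul, norm_pow, Complex.norm_natCast]
          have hk : (0:ℝ) ≤ (k:ℝ) := Nat.cast_nonneg k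
          have hp : ‖z‖^(2+k) ≤ ‖z‖ :=
            pow_le_of_le_one (norm_nonneg z) hz1.le (by omega)
          have h1 : ‖a k‖ * (((1:ℕ)+k : ℕ):ℝ) * ‖z‖^(2+k) ≤ ‖a k‖ * (((1:ℕ)+k : ℕ):ℝ) * ‖z‖ :=
            mul_le_mul_of_nonneg_left hp (by positivity)
          have h2 : ((1:ℝ)+k) * ‖a k‖ ≤ (1/3) * ((((2:ℝ)+k)^2 - 1) * ‖a k‖) := by
            nlinarith [norm_nonneg (a k), mul_nonneg (mul_nonneg hk hk) (norm_nonneg (a k)),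
              mul_nonneg hk (norm_nonneg (a k))]
          calc ‖a k‖ * (((1:ℕ)+k : ℕ):ℝ) * ‖z‖^(2+k)
              ≤ ‖a k‖ * (((1:ℕ)+k : ℕ):ℝ) * ‖z‖ := h1
            _ = ‖z‖ * (((1:ℝ)+k) * ‖a k‖) := by push_cast; ring
            _ ≤ ‖z‖ * ((1/3) * ((((2:ℝ)+k)^2 - 1) * ‖a k‖)) :=
                mul_le_mul_of_nonneg_left h2 (norm_nonneg z)
      _ = ‖z‖ * ((1/3) * ∑' k : ℕ, (((2:ℝ)+k)^2 - 1) * ‖a k‖) := by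
          rw [tsum_mul_left, tsum_mul_left]
      _ ≤ ‖z‖ * ((1/3) * (3/2)) := by
          refine mul_le_mul_of_nonneg_left ?_ (norm_nonneg z)
          exact mul_le_mul_of_nonneg_left hle (by norm_num)
      _ < 1/2 := by nlinarith [norm_nonneg z]
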